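/- The 'envy graph' of a Pareto efficient allocation is acyclic, where the envy graph has objects as vertices and a directed edge from h to h' whenever some agent currently holding h strictly prefers h' to h and some agent currently holds h'. -/

import Mathlib

open List

/-- Any list with a duplicate splits as `l₁ ++ b :: l₂` with `b ∈ l₂`. -/
lemma exists_dup_split {α : Type*} : ∀ {l : List α}, ¬ l.Nodup →
    ∃ (b : α) (l₁ l₂ : List α), l = l₁ ++ b :: l₂ ∧ b ∈ l₂ := by
  intro l
  induction l with
  | nil => intro h; exact absurd List.nodup_nil h
  | cons a l ih =>
    intro h
    rw [List.nodup_cons] at h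
    push_neg at h
    by_cases ha : a ∈ l
    · exact ⟨a, [], l, rfl, ha⟩
    · obtain ⟨b, l₁, l₂, rfl, hb⟩ := ih (h ha)
      exact ⟨b, a :: l₁, l₂, rfl, hb⟩

/-- If a relation `S` admits a cycle (a chain from `a` back to `a`), and
`S` is "improvable-free" in the sense encoded below, contradiction.  Here we
prove: a cycle on a nodup list can always be extracted from any cycle. -/
lemma exists_nodup_cycle {α : Type*} {S : α → α → Prop} :
    ∀ (n : ℕ) (m : List α) (a : α), m.length ≤ n → List.Chain S a (m ++ [a]) →
      ∃ (b : α) (m' : List α), (b :: m').Nodup ∧ List.Chain S b (m' ++ [b]) := by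
  intro n
  induction n with
  | zero =>
    intro m a hm hc
    obtain rfl : m = [] := List.length_eq_zero_iff.mp (Nat.le_zero.mp hm)
    exact ⟨a, [], by simp, hc⟩
  | succ n ih =>
    intro m a hm hc
    by_cases hnd : (a :: m).Nodup
    · exact ⟨a, m, hnd, hc⟩
    · rw [List.nodup_cons] at hnd
      push_neg at hnd
      by_cases ha : a ∈ m
      · obtain ⟨l₁, l₂, rfl⟩ := List.append_of_mem ha
        rw [List.append_assoc, List.cons_append] at hc
        simp only [List.Chain] at hc
        rw [List.isChain_cons_split] at hc
        refine ih l₂ a ?_ hc.2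
        simp only [List.length_append, List.length_cons] at hm
        omega
      · obtain ⟨b, l₁, l₂, rfl, hb⟩ := exists_dup_split (hnd ha)
        rw [List.append_assoc, List.cons_append] at hc
        simp only [List.Chain] at hc
        rw [List.isChain_cons_split] at hc
        have hc2 := hc.2
        obtain ⟨l₃, l₄, rfl⟩ := List.append_of_mem hb
        rw [List.append_assoc, List.cons_append, List.isChain_cons_split] at hc2
        refine ih l₃ b ?_ hc2.1
        simp only [List.length_append, List.length_cons] at hm
        omega

/-- the envy graph of a Pareto efficient allocation is acyclic. -/
theorem stmt_2 {I H : Type*} [Fintype I]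
    (P : I → H → H → Prop) (x : I → H)
    (hasymm : ∀ i : I, ∀ a b : H, P i a b → ¬ P i b a)
    (htrans : ∀ i : I, ∀ a b c : H, P i a b → P i b c → P i a c)
    (htotal : ∀ i : I, ∀ a b : H, a ≠ b → P i a b ∨ P i b a)
    (hPE : ¬ ∃ σ : Equiv.Perm I,
      (∀ i : I, x (σ i) = x i ∨ P i (x (σ i)) (x i)) ∧
      (∃ i : I, P i (x (σ i)) (x i))) :
    ∀ h : H, ¬ Relation.TransGen
      (fun h h' : H => ∃ i i' : I, x i = h ∧ x i' = h' ∧ P i h' h) h h := by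
  classical
  set r : H → H → Prop := fun h h' => ∃ i i' : I, x i = h ∧ x i' = h' ∧ P i h' h with hr
  set S : I → I → Prop := fun i j => P i (x j) (x i) with hS
  intro h hcyc
  -- lift object cycle to an agent cycle
  have lift : ∀ h₁ h₂ : H, Relation.TransGen r h₁ h₂ → ∀ j : I, x j = h₂ →
      ∃ i : I, x i = h₁ ∧ Relation.TransGen S i j := by
    intro h₁ h₂ ht
    induction ht with
    | single hstep =>
      intro j hj
      obtain ⟨i, i', hi, hi', hp⟩ := hstep
      exact ⟨i, hi, Relation.TransGen.single (by simp only [hS]; rw [hj, hi]; exact hp)⟩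
    | tail _ hstep ih =>
      intro j hj
      obtain ⟨i, i', hi, hi', hp⟩ := hstep
      obtain ⟨i₀, hi₀, ht₀⟩ := ih i hi
      exact ⟨i₀, hi₀, ht₀.tail (by simp only [hS]; rw [hj, hi]; exact hp)⟩
  -- there is an agent holding h
  obtain ⟨j, hj⟩ : ∃ j : I, x j = h := by
    rcases hcyc with hstep | ⟨_, hstep⟩ <;>
      · obtain ⟨i, i', hi, hi', _⟩ := hstep; exact ⟨i', hi'⟩
  obtain ⟨i, hih, hSc⟩ := lift h h hcyc j hj
  -- Here i holds h, TransGen S i j, x j = h.  Get TransGen S i i: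
  -- From TransGen S i j with x i = x j, get a genuine agent cycle, then a
  -- nodup cycle list, then a Pareto-improving permutation: contradiction.
  have hxij : x i = x j := by rw [hih, hj]
  cases hSc with
  | single hstep =>
    -- single step: S i j with x i = x j gives P i (x j) (x j), absurd
    have h2 : P i (x j) (x j) := by
      simp only [hS] at hstep; rwa [hxij] at hstep
    exact hasymm i (x j) (x j) h2 h2
  | tail ht hstep =>
    rename_i b
    have hSc' : Relation.TransGen S i i :=
      ht.tail (show S b i by simp only [hS] at hstep ⊢; rwa [← hxij] at hstep)
    -- unfold one head step and use exists_chain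
    obtain ⟨c, hic, hrt⟩ : ∃ c, S i c ∧ Relation.ReflTransGen S c i :=
      Relation.TransGen.head'_iff.mp hSc'
    obtain ⟨l, hl, hlast⟩ := List.exists_isChain_cons_of_relationReflTransGen hrt
    have hchain : List.Chain S i ((c :: l).dropLast ++ [i]) := by
      have heq : (c :: l).dropLast ++ [i] = c :: l := by
        conv_rhs => rw [← List.dropLast_append_getLast (List.cons_ne_nil c l)]
        rw [hlast]
      rw [heq]
      exact List.Chain.cons hic hl
    obtain ⟨b', m', hnd, hcyc'⟩ :=
      exists_nodup_cycle (((c :: l).dropLast).length)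
        ((c :: l).dropLast) i le_rfl hchain
    set L : List I := b' :: m' with hL
    have hLlen : 0 < L.length := by simp [hL]
    have hch' : List.Chain' S (L ++ [b']) := by
      rw [hL, List.cons_append]
      exact hcyc'
    -- key: S L[k] L[(k+1) % L.length]
    have key : ∀ (k : ℕ) (hk : k < L.length),
        S (L.get ⟨k, hk⟩) (L.get ⟨(k + 1) % L.length, Nat.mod_lt _ hLlen⟩) := by
      intro k hk
      have h1 : k < (L ++ [b']).length - 1 := by
        simp only [List.length_append, List.length_cons, List.length_nil]
        omega
      have hstep2 : S ((L ++ [b']).get ⟨k, by simp; omega⟩) ((L ++ [b']).get ⟨k + 1, by simp; omega⟩) :=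
        List.isChain_iff_getElem.mp hch' k (by omega)
      have e1 : (L ++ [b']).get ⟨k, by simp; omega⟩ = L.get ⟨k, hk⟩ :=
        List.getElem_append_left hk
      rcases Nat.lt_or_ge (k + 1) L.length with hk1 | hk1
      · have e2 : (L ++ [b']).get ⟨k + 1, by simp; omega⟩ = L.get ⟨k + 1, hk1⟩ :=
          List.getElem_append_left hk1
        have e3 : (k + 1) % L.length = k + 1 := Nat.mod_eq_of_lt hk1
        rw [e1, e2] at hstep2
        convert hstep2 using 2
        simp [e3]
      · have hkeq : k + 1 = L.length := by omega
        have e2 : (L ++ [b']).get ⟨k + 1, by simp; omega⟩ = b' := by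
          simp only [List.get_eq_getElem, hkeq]
          simp [List.getElem_concat_length]
        have e0 : L.get ⟨(k + 1) % L.length, Nat.mod_lt _ hLlen⟩ = b' := by
          have e3 : (k + 1) % L.length = 0 := by rw [hkeq, Nat.mod_self]
          simp only [List.get_eq_getElem, e3]
          simp [hL]
        rw [e1, e2] at hstep2
        rw [e0]
        exact hstep2
    -- the permutation
    refine hPE ⟨L.formPerm, ?_, ?_⟩
    · intro a
      by_cases haL : a ∈ L
      · right
        obtain ⟨k, rfl⟩ := List.mem_iff_get.mp haL
        have hkey := key k.1 k.2
        rw [show L.formPerm (L.get k) = L.get ⟨(k.1 + 1) % L.length, Nat.mod_lt _ hLlen⟩ by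
          have hfp := List.formPerm_apply_getElem L hnd k.1 k.2
          simpa using hfp]
        exact hkey
      · left; rw [List.formPerm_apply_of_notMem haL]
    · refine ⟨b', ?_⟩
      have hb'L : b' ∈ L := by simp [hL]
      obtain ⟨k, hkb⟩ := List.mem_iff_get.mp hb'L
      have hkey := key k.1 k.2
      rw [hkb] at hkey
      rw [show L.formPerm b' = L.get ⟨(k.1 + 1) % L.length, Nat.mod_lt _ hLlen⟩ by
        rw [← hkb]
        have hfp := List.formPerm_apply_getElem L hnd k.1 k.2
        simpa using hfp]
      exact hkey
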